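/- Let W be a 2-dimensional real vector space with basis Z₁, Z₂ and let c ∈ ℝ. Suppose φ : W → W is a linear isomorphism and a₁,a₂,a₃,a₄ are nonzero reals with φ(Z₁)=a₁Z₁, φ(c·Z₁+Z₂)=a₂(c'·Z₁+Z₂), φ(Z₂)=a₃Z₂, and φ(Z₁ - c·Z₂)=a₄(Z₁ - c'·Z₂) for some c' ∈ ℝ. Then c² = c'². -/

import Mathlib

/-- Linear-algebraic core of the affine invariance of `α¹₆`: if `φ` rescales the four
vectors `Z₁`, `c·Z₁+Z₂`, `Z₂`, `Z₁-c·Z₂` onto `Z₁`, `c'·Z₁+Z₂`, `Z₂`, `Z₁-c'·Z₂`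
respectively (with nonzero factors), then `c² = c'²`. -/
theorem stmt_9 (W : Type*) [AddCommGroup W] [Module ℝ W]
    (b : Module.Basis (Fin 2) ℝ W) (φ : W ≃ₗ[ℝ] W) (c c' : ℝ)
    (a₁ a₂ a₃ a₄ : ℝ) (h₁ : a₁ ≠ 0) (h₂ : a₂ ≠ 0) (h₃ : a₃ ≠ 0) (h₄ : a₄ ≠ 0)
    (hZ₁ : φ (b 0) = a₁ • b 0)
    (hmix : φ (c • b 0 + b 1) = a₂ • (c' • b 0 + b 1))
    (hZ₂ : φ (b 1) = a₃ • b 1)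
    (hmix' : φ (b 0 - c • b 1) = a₄ • (b 0 - c' • b 1)) :
    c ^ 2 = c' ^ 2 := by
  rw [map_add, map_smul, hZ₁, hZ₂] at hmix
  rw [map_sub, map_smul, hZ₁, hZ₂] at hmix'
  have e1 := congrArg (fun w => b.repr w 0) hmix
  have e2 := congrArg (fun w => b.repr w 1) hmix
  have e3 := congrArg (fun w => b.repr w 0) hmix'
  have e4 := congrArg (fun w => b.repr w 1) hmix'
  simp [Module.Basis.repr_self, Finsupp.single_apply] at e1 e2 e3 e4
  -- e1 : c*a₁ = a₂*c', e2 : a₃ = a₂, e3 : a₁ = a₄, e4 : c*a₃ = a₄*c'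
  have e5 : (c * a₁) * (c * a₃) = (a₂ * c') * (a₄ * c') := by rw [e1, e4]
  have key : c ^ 2 * (a₁ * a₂) = c' ^ 2 * (a₁ * a₂) := by
    subst e2 e3; ring_nf at e5 ⊢; linarith [e5]
  exact mul_right_cancel₀ (mul_ne_zero h₁ h₂) key
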